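/- Suppose Σ_{i=1}^m Σ_{k=1}^n q(i,σ(i),k,π(k)) = K for every permutation σ of {1,...,m} and every permutation π of {1,...,n}, where K is a constant. Then for all i,j,k,ℓ with indices at least 2 (taking index 1 as a reference), q(i,j,k,ℓ) = q(i,j,k,1) + q(i,j,1,ℓ) + q(i,1,k,ℓ) + q(1,j,k,ℓ) − q(i,j,1,1) − q(i,1,k,1) − q(i,1,1,ℓ) − q(1,j,k,1) − q(1,j,1,ℓ) − q(1,1,k,ℓ) + q(i,1,1,1) + q(1,j,1,1) + q(1,1,k,1) + q(1,1,1,ℓ) − q(1,1,1,1), and this identity in fact holds for all i,j ∈ {1,...,m} and k,ℓ ∈ {1,...,n}. -/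

import Mathlib

lemma keyA {N : ℕ} (f : Fin (N + 2) → Fin (N + 2) → ℝ) (C : ℝ)
    (h : ∀ π : Equiv.Perm (Fin (N + 2)), (∑ k, f k (π k)) = C)
    {c d u v : Fin (N + 2)} (hcd : c ≠ d) (huv : u ≠ v) :
    f c u + f d v = f c v + f d u := by
  set π₀ := Equiv.swap c u with hπ₀
  set π := Equiv.swap (π₀ d) v * π₀ with hπ
  have hdu : π₀ d ≠ u := by
    intro hdu
    apply hcd
    have : π₀ d = π₀ c := by rw [hdu]; simp [hπ₀]
    exact (π₀.injective this).symm
  have hπc : π c = u := by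
    simp only [hπ, Equiv.Perm.mul_apply]
    rw [show π₀ c = u by simp [hπ₀]]
    exact Equiv.swap_apply_of_ne_of_ne (Ne.symm hdu) huv
  have hπd : π d = v := by
    simp only [hπ, Equiv.Perm.mul_apply]
    exact Equiv.swap_apply_left _ _
  set π' := π * Equiv.swap c d with hπ'
  have hsum : (∑ k, (f k (π k) - f k (π' k))) = 0 := by
    rw [Finset.sum_sub_distrib, h π, h π', sub_self]
  have hsub : (∑ k ∈ ({c, d} : Finset (Fin (N + 2))),
      (f k (π k) - f k (π' k))) = ∑ k, (f k (π k) - f k (π' k)) := by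
    apply Finset.sum_subset (Finset.subset_univ _)
    intro x _ hx
    simp only [Finset.mem_insert, Finset.mem_singleton, not_or] at hx
    have : π' x = π x := by
      simp [hπ', Equiv.Perm.mul_apply, Equiv.swap_apply_of_ne_of_ne hx.1 hx.2]
    rw [this, sub_self]
  rw [hsum, Finset.sum_pair hcd] at hsub
  have hc' : π' c = v := by
    simp [hπ', Equiv.Perm.mul_apply, hπd]
  have hd' : π' d = u := by
    simp [hπ', Equiv.Perm.mul_apply, hπc]
  rw [hπc, hπd, hc', hd'] at hsub
  linarith

theorem stmt_6 (m n : ℕ)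
    (q : Fin (m + 2) → Fin (m + 2) → Fin (n + 2) → Fin (n + 2) → ℝ)
    (K : ℝ)
    (hK : ∀ (σ : Equiv.Perm (Fin (m + 2))) (π : Equiv.Perm (Fin (n + 2))),
      (∑ i, ∑ k, q i (σ i) k (π k)) = K) :
    ∀ (i j : Fin (m + 2)) (k l : Fin (n + 2)),
      q i j k l =
        q i j k 0 + q i j 0 l + q i 0 k l + q 0 j k l
        - q i j 0 0 - q i 0 k 0 - q i 0 0 l - q 0 j k 0 - q 0 j 0 l - q 0 0 k l
        + q i 0 0 0 + q 0 j 0 0 + q 0 0 k 0 + q 0 0 0 l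
        - q 0 0 0 0 := by
  have step1 : ∀ (a b x y : Fin (m + 2)), a ≠ b → x ≠ y →
      ∀ π : Equiv.Perm (Fin (n + 2)),
      (∑ k, (q a x k (π k) + q b y k (π k) - q a y k (π k) - q b x k (π k))) = 0 := by
    intro a b x y hab hxy π
    have h := keyA (fun i x => ∑ k, q i x k (π k)) K (fun σ => hK σ π) hab hxy
    have e : (∑ k, (q a x k (π k) + q b y k (π k) - q a y k (π k) - q b x k (π k)))
        = (∑ k, q a x k (π k)) + (∑ k, q b y k (π k))
          - (∑ k, q a y k (π k)) - (∑ k, q b x k (π k)) := by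
      rw [Finset.sum_sub_distrib, Finset.sum_sub_distrib, Finset.sum_add_distrib]
    rw [e]
    linarith
  have step2 : ∀ (a b x y : Fin (m + 2)), a ≠ b → x ≠ y →
      ∀ (c d u v : Fin (n + 2)), c ≠ d → u ≠ v →
      (q a x c u + q b y c u - q a y c u - q b x c u)
      + (q a x d v + q b y d v - q a y d v - q b x d v)
      = (q a x c v + q b y c v - q a y c v - q b x c v)
      + (q a x d u + q b y d u - q a y d u - q b x d u) := by
    intro a b x y hab hxy c d u v hcd huv
    exact keyA (fun k l => q a x k l + q b y k l - q a y k l - q b x k l) 0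
      (step1 a b x y hab hxy) hcd huv
  intro i j k l
  by_cases hi : i = 0
  · subst hi; ring
  by_cases hj : j = 0
  · subst hj; ring
  by_cases hk : k = 0
  · subst hk; ring
  by_cases hl : l = 0
  · subst hl; ring
  have h := step2 i 0 j 0 hi hj k 0 l 0 hk hl
  linarith
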